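/- As a ↑ 1, the elliptic-type integral satisfies ∫_a^1 sqrt((μ²−a²)/(1−μ²)) dμ = (π/2)(1−a)(1 − (1−a)/4 + O((1−a)²)). -/

import Mathlib

open Filter Topology MeasureTheory intervalIntegral Set

set_option maxHeartbeats 1000000


lemma aux_rpow_int (a : ℝ) :
    IntervalIntegrable (fun x : ℝ => (1 - x) ^ (-(1/2) : ℝ)) volume a 1 := by
  have h := (intervalIntegrable_rpow' (r := -(1/2)) (by norm_num)
    (a := 1 - a) (b := 0)).comp_sub_left 1
  simpa using h

lemma aux_sqrt_le {μ num : ℝ} (hμ : μ ≤ 1) (hnum : num ≤ 1) :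
    Real.sqrt (num / (1 - μ)) ≤ (1 - μ) ^ (-(1/2) : ℝ) := by
  rcases eq_or_lt_of_le hμ with h0 | h0
  · rw [h0]; norm_num [Real.zero_rpow]
  · have hd : 0 < 1 - μ := by linarith
    have h1 : num / (1 - μ) ≤ 1 / (1 - μ) := by gcongr
    calc Real.sqrt (num / (1 - μ)) ≤ Real.sqrt (1 / (1 - μ)) := Real.sqrt_le_sqrt h1
      _ = (1 - μ) ^ (-(1/2) : ℝ) := by
          rw [one_div, Real.sqrt_inv, Real.sqrt_eq_rpow, ← Real.rpow_neg hd.le]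

lemma J0_integrable : IntervalIntegrable (fun t : ℝ => Real.sqrt (t / (1 - t))) volume 0 1 := by
  apply (aux_rpow_int 0).mono_fun'
  · apply Measurable.aestronglyMeasurable
    exact (measurable_id.div (measurable_const.sub measurable_id)).sqrt
  · filter_upwards [ae_restrict_mem measurableSet_uIoc] with x hx
    rw [uIoc_of_le (by norm_num : (0:ℝ) ≤ 1)] at hx
    have : ‖Real.sqrt (x / (1 - x))‖ = Real.sqrt (x / (1 - x)) := by
      rw [Real.norm_eq_abs, abs_of_nonneg (Real.sqrt_nonneg _)]
    rw [this]
    exact aux_sqrt_le hx.2 hx.2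

lemma J0 : ∫ t in (0:ℝ)..1, Real.sqrt (t / (1 - t)) = Real.pi / 2 := by
  have hcont : ContinuousOn
      (fun t : ℝ => Real.arcsin (2 * t - 1) / 2 - Real.sqrt (t - t ^ 2)) (Icc 0 1) := by
    apply Continuous.continuousOn
    exact ((Real.continuous_arcsin.comp (by continuity)).div_const 2).sub
      (Real.continuous_sqrt.comp (by continuity))
  have hderiv : ∀ t ∈ Ioo (0:ℝ) 1,
      HasDerivAt (fun t : ℝ => Real.arcsin (2 * t - 1) / 2 - Real.sqrt (t - t ^ 2))
        (Real.sqrt (t / (1 - t))) t := by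
    intro t ht
    obtain ⟨ht0, ht1⟩ := ht
    have hst : (0:ℝ) < Real.sqrt t := Real.sqrt_pos.mpr ht0
    have hsu : (0:ℝ) < Real.sqrt (1 - t) := Real.sqrt_pos.mpr (by linarith)
    have hst2 : Real.sqrt t ^ 2 = t := Real.sq_sqrt ht0.le
    have hsu2 : Real.sqrt (1 - t) ^ 2 = 1 - t := Real.sq_sqrt (by linarith)
    have hinner : HasDerivAt (fun t : ℝ => 2 * t - 1) 2 t := by
      simpa using ((hasDerivAt_id t).const_mul 2).sub_const 1
    have h1 : HasDerivAt (fun t : ℝ => Real.arcsin (2 * t - 1))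
        (1 / Real.sqrt (1 - (2 * t - 1) ^ 2) * 2) t :=
      (Real.hasDerivAt_arcsin (by nlinarith) (by nlinarith)).comp t hinner
    have hinner2 : HasDerivAt (fun t : ℝ => t - t ^ 2) (1 - 2 * t) t := by
      exact ((hasDerivAt_id' t).sub (hasDerivAt_pow 2 t)).congr_deriv (by norm_num)
    have h2 : HasDerivAt (fun t : ℝ => Real.sqrt (t - t ^ 2))
        (1 / (2 * Real.sqrt (t - t ^ 2)) * (1 - 2 * t)) t :=
      (Real.hasDerivAt_sqrt (by nlinarith)).comp t hinner2
    have := (h1.div_const 2).sub h2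
    refine this.congr_deriv ?_
    symm
    have e1 : Real.sqrt (1 - (2 * t - 1) ^ 2) = 2 * (Real.sqrt t * Real.sqrt (1 - t)) := by
      rw [show 1 - (2 * t - 1) ^ 2 = 4 * (t * (1 - t)) by ring,
        show (4 : ℝ) = 2 ^ 2 by norm_num, Real.sqrt_mul (by positivity),
        Real.sqrt_sq (by norm_num), Real.sqrt_mul ht0.le]
    have e2 : Real.sqrt (t - t ^ 2) = Real.sqrt t * Real.sqrt (1 - t) := by
      rw [show t - t ^ 2 = t * (1 - t) by ring, Real.sqrt_mul ht0.le]
    have e3 : Real.sqrt (t / (1 - t)) = Real.sqrt t / Real.sqrt (1 - t) := Real.sqrt_div ht0.le _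
    rw [e1, e2, e3]
    field_simp
    linear_combination 2 * hst2
  have := integral_eq_sub_of_hasDerivAt_of_le (by norm_num : (0:ℝ) ≤ 1) hcont hderiv J0_integrable
  rw [this]
  norm_num [Real.arcsin_one, Real.arcsin_neg_one]
  ring
lemma Jh {a : ℝ} (ha : a < 1) :
    ∫ μ in a..(1:ℝ), Real.sqrt ((μ - a) / (1 - μ)) = (1 - a) * (Real.pi / 2) := by
  have hc : (1 - a) ≠ 0 := by linarith
  have key := integral_comp_mul_add (a := (0:ℝ)) (b := 1)
    (f := fun μ => Real.sqrt ((μ - a) / (1 - μ))) hc a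
  have heq : ∀ t : ℝ, Real.sqrt (((1 - a) * t + a - a) / (1 - ((1 - a) * t + a)))
      = Real.sqrt (t / (1 - t)) := by
    intro t
    congr 1
    rw [show (1 - a) * t + a - a = (1 - a) * t by ring,
      show 1 - ((1 - a) * t + a) = (1 - a) * (1 - t) by ring,
      mul_div_mul_left _ _ hc]
  simp only [heq] at key
  rw [J0] at key
  rw [show (1 - a) * 0 + a = a by ring, show (1 - a) * 1 + a = 1 by ring] at key
  rw [smul_eq_mul] at key
  field_simp at key
  linarith [key]
/-- As `a ↑ 1`,
`∫_a^1 sqrt((μ²-a²)/(1-μ²)) dμ = (π/2)(1-a)(1 - (1-a)/4 + O((1-a)²))`. -/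
theorem ellInt_asymptotics_a_to_one :
    (fun a : ℝ =>
        (∫ μ in a..1, Real.sqrt ((μ ^ 2 - a ^ 2) / (1 - μ ^ 2))) -
          Real.pi / 2 * (1 - a) * (1 - (1 - a) / 4))
      =O[𝓝[<] (1 : ℝ)] fun a : ℝ => (1 - a) ^ 3 := by
  rw [Asymptotics.isBigO_iff]
  refine ⟨2, ?_⟩
  have h1 : ∀ᶠ a in 𝓝[<] (1:ℝ), (1/2 : ℝ) < a :=
    eventually_nhdsWithin_of_eventually_nhds (eventually_gt_nhds (by norm_num))
  have h2 : ∀ᶠ a in 𝓝[<] (1:ℝ), a < 1 := eventually_mem_nhdsWithin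
  filter_upwards [h1, h2] with a ha2 ha1
  set ε := 1 - a with hεdef
  have hε0 : 0 < ε := by simp only [hεdef]; linarith
  have hεh : ε < 1/2 := by simp only [hεdef]; linarith
  have ha0 : (0:ℝ) < a := by linarith
  set g1 := Real.sqrt ((1 + a) / 2) with hg1def
  set h := fun μ : ℝ => Real.sqrt ((μ - a) / (1 - μ)) with hhdef
  set f := fun μ : ℝ => Real.sqrt ((μ ^ 2 - a ^ 2) / (1 - μ ^ 2)) with hfdef
  -- integrability
  have hmeas_h : AEStronglyMeasurable h (volume.restrict (Set.uIoc a 1)) := by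
    apply Measurable.aestronglyMeasurable
    exact ((measurable_id.sub_const a).div (measurable_const.sub measurable_id)).sqrt
  have hmeas_f : AEStronglyMeasurable f (volume.restrict (Set.uIoc a 1)) := by
    apply Measurable.aestronglyMeasurable
    exact (((measurable_id.pow_const 2).sub_const (a^2)).div
      (measurable_const.sub (measurable_id.pow_const 2))).sqrt
  have hint_h : IntervalIntegrable h volume a 1 := by
    apply (aux_rpow_int a).mono_fun' hmeas_h
    filter_upwards [ae_restrict_mem measurableSet_uIoc] with x hx
    rw [uIoc_of_le ha1.le] at hx
    rw [Real.norm_eq_abs, abs_of_nonneg (Real.sqrt_nonneg _)]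
    exact aux_sqrt_le hx.2 (by linarith [hx.2])
  have hint_f : IntervalIntegrable f volume a 1 := by
    apply (aux_rpow_int a).mono_fun' hmeas_f
    filter_upwards [ae_restrict_mem measurableSet_uIoc] with x hx
    rw [uIoc_of_le ha1.le] at hx
    rw [Real.norm_eq_abs, abs_of_nonneg (Real.sqrt_nonneg _)]
    rcases eq_or_lt_of_le hx.2 with hx1 | hx1
    · rw [hx1]; norm_num [Real.zero_rpow]
    have hnum : x ^ 2 - a ^ 2 ≤ 1 := by nlinarith [hx.1, hx.2]
    have : Real.sqrt ((x ^ 2 - a ^ 2) / (1 - x ^ 2)) ≤ (1 - x^2) ^ (-(1/2):ℝ) :=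
      aux_sqrt_le (μ := x ^ 2) (by nlinarith [hx.1]) hnum
    refine this.trans ?_
    apply Real.rpow_le_rpow_of_nonpos
    · nlinarith [hx.1]
    · nlinarith [hx.1]
    · norm_num
  -- pointwise estimate
  have hpt : ∀ μ ∈ Set.uIoc a 1, ‖f μ - g1 * h μ‖ ≤ ε ^ 2 := by
    intro μ hμ
    rw [uIoc_of_le ha1.le] at hμ
    obtain ⟨hμa, hμ1⟩ := hμ
    rcases eq_or_lt_of_le hμ1 with h1 | h1
    · simp only [hfdef, hhdef, h1]
      norm_num
      positivity
    · have hm1 : 0 < 1 - μ := by linarith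
      have hma : 0 < μ - a := by linarith
      have hμ0 : 0 < μ := by linarith
      set g := Real.sqrt ((μ + a) / (1 + μ)) with hgdef
      have hfact : f μ = h μ * g := by
        simp only [hfdef, hhdef, hgdef]
        rw [show (μ ^ 2 - a ^ 2) / (1 - μ ^ 2) = ((μ - a) / (1 - μ)) * ((μ + a) / (1 + μ)) by
          rw [div_mul_div_comm]; congr 1 <;> ring]
        exact Real.sqrt_mul (by positivity) _
      have hg_nn : 0 ≤ g := Real.sqrt_nonneg _
      have hh_nn : 0 ≤ h μ := Real.sqrt_nonneg _
      have hg2 : g ^ 2 = (μ + a) / (1 + μ) := Real.sq_sqrt (by positivity)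
      have hg12 : g1 ^ 2 = (1 + a) / 2 := Real.sq_sqrt (by positivity)
      have hg1half : (1/2 : ℝ) ≤ g1 := by
        rw [hg1def, show (1/2 : ℝ) = Real.sqrt ((1/2)^2) by
          rw [Real.sqrt_sq]; norm_num]
        apply Real.sqrt_le_sqrt; nlinarith
      have hE : (g ^ 2 - g1 ^ 2) * (2 * (1 + μ)) = -((1 - μ) * ε) := by
        rw [hg2, hg12, hεdef]; field_simp; ring
      have hgle : g ≤ g1 := by
        rw [hgdef, hg1def]
        apply Real.sqrt_le_sqrt
        rw [div_le_div_iff₀ (by linarith) (by norm_num)]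
        nlinarith
      have hgdiff : |g - g1| ≤ ε * (1 - μ) := by
        have hd : 0 ≤ g1 - g := by linarith
        have h5 : (g1 - g) * (1/2) ≤ (g1 - g) * (g1 + g) :=
          mul_le_mul_of_nonneg_left (by linarith) hd
        have h6 : (g1 - g) * (g1 + g) = g1 ^ 2 - g ^ 2 := by ring
        have hX : 0 ≤ g1 ^ 2 - g ^ 2 := by nlinarith
        have h7 : g1 ^ 2 - g ^ 2 ≤ (1 - μ) * ε / 2 := by
          nlinarith [mul_nonneg hX hμ0.le]
        have h8 : g1 - g ≤ ε * (1 - μ) := by nlinarith [h5, h6, h7]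
        rw [abs_le]
        refine ⟨by linarith, ?_⟩
        nlinarith [mul_pos hε0 hm1]
      have hh_eq : h μ * (1 - μ) = Real.sqrt ((μ - a) * (1 - μ)) := by
        simp only [hhdef]
        rw [show (1 - μ) = Real.sqrt ((1 - μ)^2) by rw [Real.sqrt_sq hm1.le],
          ← Real.sqrt_mul (by positivity)]
        congr 1
        rw [Real.sqrt_sq hm1.le, pow_two, ← mul_assoc, div_mul_cancel₀ _ hm1.ne']
      have hsq_le : Real.sqrt ((μ - a) * (1 - μ)) ≤ ε / 2 := by
        rw [show ε / 2 = Real.sqrt ((ε/2)^2) by rw [Real.sqrt_sq (by positivity)]]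
        apply Real.sqrt_le_sqrt
        rw [hεdef]
        nlinarith [sq_nonneg ((μ - a) - (1 - μ))]
      calc ‖f μ - g1 * h μ‖ = h μ * |g - g1| := by
            rw [hfact, Real.norm_eq_abs, show h μ * g - g1 * h μ = h μ * (g - g1) by ring,
              abs_mul, abs_of_nonneg hh_nn]
        _ ≤ h μ * (ε * (1 - μ)) := by
            exact mul_le_mul_of_nonneg_left hgdiff hh_nn
        _ = (h μ * (1 - μ)) * ε := by ring
        _ ≤ (ε / 2) * ε := by
            rw [hh_eq]
            exact mul_le_mul_of_nonneg_right hsq_le hε0.le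
        _ ≤ ε ^ 2 := by nlinarith
  -- integral difference bound
  have hIdiff : ‖(∫ μ in a..1, f μ) - g1 * ((1 - a) * (Real.pi / 2))‖ ≤ ε ^ 2 * ε := by
    have hsub : (∫ μ in a..1, f μ) - g1 * ((1 - a) * (Real.pi / 2))
        = ∫ μ in a..1, (f μ - g1 * h μ) := by
      rw [integral_sub hint_f (hint_h.const_mul g1), intervalIntegral.integral_const_mul,
        Jh ha1]
    rw [hsub]
    have := intervalIntegral.norm_integral_le_of_norm_le_const (C := ε ^ 2)
      (f := fun μ => f μ - g1 * h μ) (a := a) (b := 1) hpt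
    calc ‖∫ μ in a..1, (f μ - g1 * h μ)‖ ≤ ε ^ 2 * |1 - a| := this
      _ = ε ^ 2 * ε := by rw [abs_of_pos hε0]
  -- g1 estimate
  have hg1est : |g1 - (1 - ε / 4)| ≤ ε ^ 2 / 4 := by
    have harg : (1 + a) / 2 = 1 - ε / 2 := by rw [hεdef]; ring
    have hupper : g1 ≤ 1 - ε / 4 := by
      rw [hg1def, harg, show (1 : ℝ) - ε / 4 = Real.sqrt ((1 - ε/4)^2) by
        rw [Real.sqrt_sq (by linarith)]]
      apply Real.sqrt_le_sqrt; nlinarith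
    have hlower : 1 - ε / 4 - ε ^ 2 / 4 ≤ g1 := by
      rw [hg1def, harg]
      rw [show (1 : ℝ) - ε / 4 - ε ^ 2 / 4
          = Real.sqrt ((1 - ε/4 - ε^2/4)^2) by rw [Real.sqrt_sq (by nlinarith)]]
      apply Real.sqrt_le_sqrt
      have h3 : ε ^ 3 ≤ ε ^ 2 / 2 := by nlinarith [sq_nonneg ε]
      have h4 : ε ^ 4 ≤ ε ^ 2 / 4 := by nlinarith [sq_nonneg ε, sq_nonneg (ε^2)]
      nlinarith [h3, h4]
    rw [abs_le]; constructor <;> linarith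
  -- conclude
  have hpi : Real.pi ≤ 4 := Real.pi_le_four
  have hpi0 : 0 < Real.pi := Real.pi_pos
  have hkey : (∫ μ in a..1, f μ) - Real.pi / 2 * (1 - a) * (1 - (1 - a) / 4)
      = ((∫ μ in a..1, f μ) - g1 * ((1 - a) * (Real.pi / 2)))
        + (1 - a) * (Real.pi / 2) * (g1 - (1 - ε / 4)) := by
    rw [hεdef]; ring
  simp only [Real.norm_eq_abs] at hIdiff ⊢
  calc |(∫ μ in a..1, f μ) - Real.pi / 2 * (1 - a) * (1 - (1 - a) / 4)|
      ≤ |(∫ μ in a..1, f μ) - g1 * ((1 - a) * (Real.pi / 2))|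
        + |(1 - a) * (Real.pi / 2) * (g1 - (1 - ε / 4))| := by
        rw [hkey]; exact abs_add_le _ _
    _ ≤ ε ^ 2 * ε + (ε * (Real.pi / 2)) * (ε ^ 2 / 4) := by
        refine add_le_add hIdiff ?_
        rw [abs_mul, show |(1 - a) * (Real.pi / 2)| = ε * (Real.pi / 2) by
          rw [abs_of_pos (by positivity), hεdef]]
        exact mul_le_mul_of_nonneg_left hg1est (by positivity)
    _ ≤ 2 * |(1 - a) ^ 3| := by
        rw [show |(1 - a) ^ 3| = ε ^ 3 by
          rw [← hεdef, abs_of_pos (by positivity)]]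
        have h9 : ε ^ 3 * Real.pi ≤ ε ^ 3 * 4 :=
          mul_le_mul_of_nonneg_left hpi (pow_pos hε0 3).le
        have h10 : (0:ℝ) ≤ ε ^ 3 := (pow_pos hε0 3).le
        have h11 : ε ^ 2 * ε = ε ^ 3 := by ring
        have h12 : ε * (Real.pi / 2) * (ε ^ 2 / 4) = ε ^ 3 * Real.pi / 8 := by ring
        rw [h11, h12]
        clear_value ε
        linarith [h9, h10]
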